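/- Every homomorphism of R-bimodules from R to the transposition bimodule R̲ is zero. Concretely: if ξ : R → R is an additive map satisfying ξ(r·m) = r·ξ(m) and ξ(m·r) = ξ(m)·s(r) for all r, m ∈ R (i.e. ξ is an R-bimodule map from R to R̲, where R̲ has underlying k-module R, the ordinary left multiplication action, and right action twisted by s), then ξ = 0. -/

import Mathlib

/-- The anticommutation relation `x₁x₂ + x₂x₁ = 0` on the free `k`-algebra
on two generators. -/
inductive OddRel (k : Type*) [CommRing k] :
    FreeAlgebra k (Fin 2) → FreeAlgebra k (Fin 2) → Prop
  | anticomm : OddRel k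
      (FreeAlgebra.ι k (0 : Fin 2) * FreeAlgebra.ι k (1 : Fin 2) +
        FreeAlgebra.ι k (1 : Fin 2) * FreeAlgebra.ι k (0 : Fin 2)) 0

/-- The `k`-algebra of skew polynomials in two variables,
`R = k⟨x₁,x₂⟩/(x₁x₂ + x₂x₁)`. -/
abbrev OddPoly (k : Type*) [CommRing k] := RingQuot (OddRel k)

/-- The generators `x₁ = X k 0` and `x₂ = X k 1` of `R`. -/
noncomputable def X (k : Type*) [CommRing k] (i : Fin 2) : OddPoly k :=
  RingQuot.mkAlgHom k (OddRel k) (FreeAlgebra.ι k i)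

namespace Stmt13Aux

variable (k : Type*) [CommRing k]

/-- The representation space: `k`-linear combinations of monomials `x₁^i x₂^j`. -/
abbrev M := (ℕ × ℕ) →₀ k

/-- Left multiplication by `x₁` in the monomial model. -/
noncomputable def XE : Module.End k (M k) :=
  Finsupp.lmapDomain k k (fun p => (p.1 + 1, p.2))

/-- Signed left multiplication by `x₂` in the monomial model. -/
noncomputable def YE : Module.End k (M k) :=
  Finsupp.lsum k fun p => ((-1 : k) ^ p.1) • Finsupp.lsingle (p.1, p.2 + 1)

/-- Unsigned right shift in the second coordinate (right multiplication by `x₂`). -/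
noncomputable def ZE : Module.End k (M k) :=
  Finsupp.lmapDomain k k (fun p => (p.1, p.2 + 1))

@[simp] lemma XE_single (p : ℕ × ℕ) (a : k) :
    XE k (Finsupp.single p a) = Finsupp.single (p.1 + 1, p.2) a := by
  simp [XE, Finsupp.mapDomain_single]

@[simp] lemma YE_single (p : ℕ × ℕ) (a : k) :
    YE k (Finsupp.single p a) = Finsupp.single (p.1, p.2 + 1) ((-1 : k) ^ p.1 * a) := by
  simp [YE, Finsupp.smul_single, smul_eq_mul]

@[simp] lemma ZE_single (p : ℕ × ℕ) (a : k) :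
    ZE k (Finsupp.single p a) = Finsupp.single (p.1, p.2 + 1) a := by
  simp [ZE, Finsupp.mapDomain_single]

lemma rel_holds :
    XE k * YE k + YE k * XE k = 0 := by
  apply Finsupp.lhom_ext
  intro p a
  obtain ⟨i, j⟩ := p
  simp only [LinearMap.add_apply, Module.End.mul_apply, XE_single, YE_single,
    LinearMap.zero_apply]
  rw [← Finsupp.single_add]
  have : (-1 : k) ^ i * a + (-1 : k) ^ (i + 1) * a = 0 := by ring
  rw [this, Finsupp.single_zero]

/-- The representation `R → End(M)`. -/
noncomputable def phi : OddPoly k →ₐ[k] Module.End k (M k) :=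
  RingQuot.liftAlgHom k ⟨FreeAlgebra.lift k ![XE k, YE k], by
    rintro a b ⟨⟩
    simp only [map_add, map_mul, map_zero, FreeAlgebra.lift_ι_apply]
    show XE k * YE k + YE k * XE k = 0
    exact rel_holds k⟩

@[simp] lemma phi_X0 : phi k (X k 0) = XE k := by
  rw [X, phi, RingQuot.liftAlgHom_mkAlgHom_apply, FreeAlgebra.lift_ι_apply]
  rfl

@[simp] lemma phi_X1 : phi k (X k 1) = YE k := by
  rw [X, phi, RingQuot.liftAlgHom_mkAlgHom_apply, FreeAlgebra.lift_ι_apply]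
  rfl

/-- Induction principle for `OddPoly`. -/
lemma oddPoly_induction {C : OddPoly k → Prop}
    (halg : ∀ c : k, C (algebraMap k (OddPoly k) c))
    (hx : C (X k 0)) (hy : C (X k 1))
    (hmul : ∀ a b, C a → C b → C (a * b))
    (hadd : ∀ a b, C a → C b → C (a + b)) : ∀ r, C r := by
  intro r
  obtain ⟨a, rfl⟩ := RingQuot.mkAlgHom_surjective k (OddRel k) r
  induction a using FreeAlgebra.induction with
  | grade0 c => rw [AlgHom.commutes]; exact halg c
  | grade1 i =>
      fin_cases i
      · exact hx
      · exact hy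
  | mul a b ha hb => rw [map_mul]; exact hmul _ _ ha hb
  | add a b ha hb => rw [map_add]; exact hadd _ _ ha hb

lemma commute_ZE (r : OddPoly k) : Commute (phi k r) (ZE k) := by
  induction r using oddPoly_induction k with
  | halg c =>
      rw [AlgHom.commutes]
      exact Algebra.commute_algebraMap_left c (ZE k)
  | hx =>
      rw [phi_X0]
      apply Finsupp.lhom_ext
      intro p a
      simp [Module.End.mul_apply]
  | hy =>
      rw [phi_X1]
      apply Finsupp.lhom_ext
      intro p a
      simp only [Module.End.mul_apply, YE_single, ZE_single]
  | hmul a b ha hb => rw [map_mul]; exact ha.mul_left hb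
  | hadd a b ha hb => rw [map_add]; exact ha.add_left hb

/-- The linear map sending `single (i,j) a` to `a • x₁^i x₂^j`. -/
noncomputable def theta : M k →ₗ[k] OddPoly k :=
  Finsupp.lsum k fun p => LinearMap.toSpanSingleton k (OddPoly k) (X k 0 ^ p.1 * X k 1 ^ p.2)

@[simp] lemma theta_single (p : ℕ × ℕ) (a : k) :
    theta k (Finsupp.single p a) = a • (X k 0 ^ p.1 * X k 1 ^ p.2) := by
  simp [theta]

lemma anticomm_rel : X k 0 * X k 1 + X k 1 * X k 0 = 0 := by
  have := RingQuot.mkAlgHom_rel k (OddRel.anticomm (k := k))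
  simpa [X, map_add, map_mul] using this

lemma yx : X k 1 * X k 0 = -(X k 0 * X k 1) := by
  exact eq_neg_of_add_eq_zero_left (by rw [add_comm]; exact anticomm_rel k)

lemma y_pow_x (i : ℕ) : X k 1 * X k 0 ^ i = (-1 : k) ^ i • (X k 0 ^ i * X k 1) := by
  induction i with
  | zero => simp
  | succ n ih =>
      calc X k 1 * X k 0 ^ (n + 1) = (X k 1 * X k 0 ^ n) * X k 0 := by
              rw [pow_succ, mul_assoc]
        _ = ((-1 : k) ^ n • (X k 0 ^ n * X k 1)) * X k 0 := by rw [ih]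
        _ = (-1 : k) ^ n • (X k 0 ^ n * (X k 1 * X k 0)) := by
              rw [smul_mul_assoc, mul_assoc]
        _ = (-1 : k) ^ n • (X k 0 ^ n * -(X k 0 * X k 1)) := by rw [yx]
        _ = (-1 : k) ^ (n + 1) • (X k 0 ^ (n + 1) * X k 1) := by
              have h : X k 0 ^ n * -(X k 0 * X k 1) = -(X k 0 ^ (n + 1) * X k 1) := by
                rw [pow_succ, mul_assoc]
                exact mul_neg (X k 0 ^ n) (X k 0 * X k 1)
              rw [h, smul_neg, pow_succ (-1 : k), mul_smul, neg_one_smul, smul_neg]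

lemma theta_XE (m : M k) : theta k (XE k m) = X k 0 * theta k m := by
  induction m using Finsupp.induction_linear with
  | zero => simp
  | add f g hf hg => simp [map_add, hf, hg, mul_add]
  | single p a =>
      simp only [XE_single, theta_single]
      rw [mul_smul_comm, pow_succ', mul_assoc]

lemma theta_YE (m : M k) : theta k (YE k m) = X k 1 * theta k m := by
  induction m using Finsupp.induction_linear with
  | zero => simp
  | add f g hf hg => simp [map_add, hf, hg, mul_add]
  | single p a =>
      simp only [YE_single, theta_single]
      rw [mul_smul_comm, ← mul_assoc, y_pow_x, smul_mul_assoc, smul_smul,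
        mul_comm a, mul_assoc, ← pow_succ']

lemma theta_phi (r : OddPoly k) (m : M k) : theta k (phi k r m) = r * theta k m := by
  induction r using oddPoly_induction k generalizing m with
  | halg c =>
      rw [AlgHom.commutes]
      simp [Module.algebraMap_end_apply, Algebra.smul_def]
  | hx => rw [phi_X0]; exact theta_XE k m
  | hy => rw [phi_X1]; exact theta_YE k m
  | hmul a b ha hb =>
      rw [map_mul, Module.End.mul_apply, ha, hb, mul_assoc]
  | hadd a b ha hb =>
      rw [map_add, LinearMap.add_apply, map_add, ha, hb, add_mul]

/-- Evaluation of the representation at the vacuum vector. -/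
noncomputable def psi (r : OddPoly k) : M k := phi k r (Finsupp.single (0, 0) 1)

lemma theta_psi (r : OddPoly k) : theta k (psi k r) = r := by
  rw [psi, theta_phi]
  simp

lemma psi_injective_zero {c : OddPoly k} (h : psi k c = 0) : c = 0 := by
  have := theta_psi k c
  rw [h, map_zero] at this
  exact this.symm

lemma vanish (f : M k) (h : XE k f + ZE k f = 0) : f = 0 := by
  have key : ∀ b a : ℕ, f (a, b) = 0 := by
    intro b
    induction b with
    | zero =>
        intro a
        have h1 := DFunLike.congr_fun h (a + 1, 0)
        have hx : (XE k f) (a + 1, 0) = f (a, 0) := by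
          show (Finsupp.mapDomain (fun p : ℕ × ℕ => (p.1 + 1, p.2)) f) (a + 1, 0) = _
          exact Finsupp.mapDomain_apply
            (fun p q hpq => by
              simpa [Prod.ext_iff] using hpq) f (a, 0)
        have hz : (ZE k f) (a + 1, 0) = 0 := by
          show (Finsupp.mapDomain (fun p : ℕ × ℕ => (p.1, p.2 + 1)) f) (a + 1, 0) = 0
          apply Finsupp.mapDomain_notin_range
          rintro ⟨⟨i, j⟩, hij⟩
          simp [Prod.ext_iff] at hij
        simp only [Finsupp.add_apply, Finsupp.coe_zero, Pi.zero_apply] at h1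
        rw [hx, hz] at h1
        simpa using h1
    | succ b ih =>
        intro a
        have h1 := DFunLike.congr_fun h (a + 1, b + 1)
        have hx : (XE k f) (a + 1, b + 1) = f (a, b + 1) := by
          show (Finsupp.mapDomain (fun p : ℕ × ℕ => (p.1 + 1, p.2)) f) (a + 1, b + 1) = _
          exact Finsupp.mapDomain_apply
            (fun p q hpq => by
              simpa [Prod.ext_iff] using hpq) f (a, b + 1)
        have hz : (ZE k f) (a + 1, b + 1) = f (a + 1, b) := by
          show (Finsupp.mapDomain (fun p : ℕ × ℕ => (p.1, p.2 + 1)) f) (a + 1, b + 1) = _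
          exact Finsupp.mapDomain_apply
            (fun p q hpq => by
              simpa [Prod.ext_iff] using hpq) f (a + 1, b)
        simp only [Finsupp.add_apply, Finsupp.coe_zero, Pi.zero_apply] at h1
        rw [hx, hz, ih (a + 1)] at h1
        simpa using h1
  ext p
  obtain ⟨a, b⟩ := p
  exact key b a

end Stmt13Aux

open Stmt13Aux in
/-- Every `R`-bimodule homomorphism from `R` to the transposition bimodule
`R̲` is zero: if `ξ : R → R` is additive with `ξ(r·m) = r·ξ(m)` and
`ξ(m·r) = ξ(m)·s(r)`, then `ξ = 0`. -/
theorem stmt13 (k : Type*) [CommRing k]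
    (s : OddPoly k ≃ₐ[k] OddPoly k)
    (hs1 : s (X k 0) = - X k 1) (hs2 : s (X k 1) = - X k 0)
 :
    ∀ ξ : OddPoly k →+ OddPoly k,
      (∀ r m : OddPoly k, ξ (r * m) = r * ξ m) →
      (∀ m r : OddPoly k, ξ (m * r) = ξ m * s r) →
      ξ = 0 := by
  intro ξ hL hR
  -- let c = ξ 1; from the two module conditions, x₁ * c = -(c * x₂)
  set c := ξ 1 with hc
  have key : X k 0 * c = -(c * X k 1) := by
    have h1 : ξ (X k 0 * 1) = X k 0 * c := hL (X k 0) 1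
    have h2 : ξ (1 * X k 0) = c * s (X k 0) := hR 1 (X k 0)
    rw [mul_one] at h1
    rw [one_mul] at h2
    rw [h1.symm.trans h2, hs1]
    exact mul_neg c (X k 1)
  -- transfer to the monomial model
  have hpsi : XE k (psi k c) + ZE k (psi k c) = 0 := by
    have e1 : psi k (X k 0 * c) = XE k (psi k c) := by
      rw [psi, map_mul, Module.End.mul_apply, phi_X0]; rfl
    have e2 : psi k (c * X k 1) = ZE k (psi k c) := by
      rw [psi, map_mul, Module.End.mul_apply, phi_X1]
      have hsingle : YE k (Finsupp.single ((0 : ℕ), (0 : ℕ)) (1 : k))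
          = ZE k (Finsupp.single ((0 : ℕ), (0 : ℕ)) (1 : k)) := by
        simp
      rw [hsingle, ← Module.End.mul_apply, (commute_ZE k c).eq, Module.End.mul_apply]
      rfl
    have := congrArg (psi k) key
    rw [e1] at this
    have : XE k (psi k c) = -(ZE k (psi k c)) := by
      rw [this, psi, map_neg, LinearMap.neg_apply, ← psi]
      rw [e2]
    rw [this]
    exact neg_add_cancel _
  have hc0 : c = 0 := psi_injective_zero k (vanish k _ hpsi)
  ext m
  have := hL m 1
  rw [mul_one] at this
  rw [this, ← hc, hc0, mul_zero]
  rfl
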